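/- Let n ≥ 2 and s ≥ 1 be integers and M = n·I_s − J_s. Then per(M ∘ M) = s! · Σ_{r=0}^{s} (n(n−2))^r / r!, where M ∘ M is the entrywise square of M. -/
import Mathlib


open Matrix

lemma aux_card_fixing (s : ℕ) (t : Finset (Fin s)) :
    (Finset.univ.filter (fun σ : Equiv.Perm (Fin s) => ∀ i ∈ t, σ i = i)).card
      = Nat.factorial (s - t.card) := by
  classical
  have e : {σ : Equiv.Perm (Fin s) // ∀ i ∈ t, σ i = i} ≃ Equiv.Perm {a : Fin s // a ∉ t} := by
    refine (Equiv.subtypeEquivRight ?_).trans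
      (Equiv.Perm.subtypeEquivSubtypePerm (fun a => a ∉ t)).symm
    intro σ
    constructor
    · intro h a ha
      exact h a (not_not.mp ha)
    · intro h i hi
      exact h i (not_not.mpr hi)
  have h1 : (Finset.univ.filter (fun σ : Equiv.Perm (Fin s) => ∀ i ∈ t, σ i = i)).card
      = Fintype.card {σ : Equiv.Perm (Fin s) // ∀ i ∈ t, σ i = i} :=
    (Fintype.card_subtype _).symm
  rw [h1, Fintype.card_congr e, Fintype.card_perm]
  congr 1
  have : Fintype.card {a : Fin s // a ∉ t} = Fintype.card (Fin s) - Fintype.card {a : Fin s // a ∈ t} :=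
    Fintype.card_subtype_compl _
  rw [this, Fintype.card_fin, Fintype.card_coe]

/-- For `M = n·I_s − J_s`, the entrywise square satisfies
`per(M ∘ M) = s! Σ_{r=0}^s (n(n−2))^r / r!`. -/
theorem permanent_hadamard_nI_sub_J (n s : ℕ) (hn : 2 ≤ n) (hs : 1 ≤ s) :
    (Matrix.hadamard
        ((n : ℚ) • (1 : Matrix (Fin s) (Fin s) ℚ) - Matrix.of (fun _ _ => (1 : ℚ)))
        ((n : ℚ) • (1 : Matrix (Fin s) (Fin s) ℚ) - Matrix.of (fun _ _ => (1 : ℚ)))).permanent =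
      (Nat.factorial s : ℚ) *
        ∑ r ∈ Finset.range (s + 1),
          ((n : ℚ) * ((n : ℚ) - 2)) ^ r / (Nat.factorial r : ℚ) := by
  classical
  set c : ℚ := (n : ℚ) * ((n : ℚ) - 2) with hc
  have hM : (Matrix.hadamard
        ((n : ℚ) • (1 : Matrix (Fin s) (Fin s) ℚ) - Matrix.of (fun _ _ => (1 : ℚ)))
        ((n : ℚ) • (1 : Matrix (Fin s) (Fin s) ℚ) - Matrix.of (fun _ _ => (1 : ℚ))))
      = Matrix.of (fun i j => (if i = j then c else 0) + 1) := by
    ext i j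
    simp only [Matrix.hadamard_apply, Matrix.sub_apply, Matrix.smul_apply, Matrix.one_apply,
      Matrix.of_apply, smul_eq_mul]
    by_cases h : i = j <;> simp [h, hc] <;> ring
  rw [hM, Matrix.permanent]
  have step1 : ∀ σ : Equiv.Perm (Fin s),
      (∏ i, Matrix.of (fun i j => (if i = j then c else 0) + 1) (σ i) i)
        = ∑ t ∈ (Finset.univ : Finset (Fin s)).powerset,
            (if ∀ i ∈ t, σ i = i then c ^ t.card else 0) := by
    intro σ
    have : (∏ i, Matrix.of (fun i j => (if i = j then c else 0) + 1) (σ i) i)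
        = ∏ i, ((if σ i = i then c else 0) + 1) := rfl
    rw [this, Finset.prod_add]
    refine Finset.sum_congr rfl fun t _ => ?_
    rw [Finset.prod_const_one, mul_one]
    by_cases h : ∀ i ∈ t, σ i = i
    · rw [if_pos h]
      rw [Finset.prod_congr rfl (fun i hi => if_pos (h i hi)), Finset.prod_const]
    · rw [if_neg h]
      push_neg at h
      obtain ⟨i, hi, hne⟩ := h
      exact Finset.prod_eq_zero hi (if_neg hne)
  simp_rw [step1]
  rw [Finset.sum_comm]
  have step2 : ∀ t ∈ (Finset.univ : Finset (Fin s)).powerset,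
      (∑ σ : Equiv.Perm (Fin s), if ∀ i ∈ t, σ i = i then c ^ t.card else 0)
        = (Nat.factorial (s - t.card) : ℚ) * c ^ t.card := by
    intro t _
    rw [← Finset.sum_filter, Finset.sum_const, aux_card_fixing, nsmul_eq_mul]
  rw [Finset.sum_congr rfl step2, Finset.sum_powerset]
  have step3 : ∀ j ∈ Finset.range ((Finset.univ : Finset (Fin s)).card + 1),
      (∑ t ∈ Finset.powersetCard j (Finset.univ : Finset (Fin s)),
          (Nat.factorial (s - t.card) : ℚ) * c ^ t.card)
        = (Nat.choose s j : ℚ) * (Nat.factorial (s - j) : ℚ) * c ^ j := by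
    intro j hj
    rw [Finset.sum_congr rfl (fun t ht => by
      rw [(Finset.mem_powersetCard.mp ht).2]), Finset.sum_const,
      Finset.card_powersetCard, Finset.card_univ, Fintype.card_fin, nsmul_eq_mul]
    ring
  rw [Finset.sum_congr rfl step3, Finset.card_univ, Fintype.card_fin, Finset.mul_sum]
  refine Finset.sum_congr rfl fun j hj => ?_
  have hjs : j ≤ s := Nat.lt_succ_iff.mp (Finset.mem_range.mp hj)
  have key : (Nat.choose s j : ℚ) * (Nat.factorial j : ℚ) * (Nat.factorial (s - j) : ℚ)
      = (Nat.factorial s : ℚ) := by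
    exact_mod_cast congrArg (Nat.cast : ℕ → ℚ)
      (Nat.choose_mul_factorial_mul_factorial hjs)
  have hj0 : (Nat.factorial j : ℚ) ≠ 0 := Nat.cast_ne_zero.mpr (Nat.factorial_ne_zero j)
  field_simp
  linear_combination c ^ j * key
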